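/- If h is a reciprocal polynomial of degree n (i.e. h(t) = t^n h(1/t)) with coefficients in a field of characteristic zero, then there exists a unique polynomial γ of degree at most ⌊n/2⌋ such that h(t) = Σ_{i=0}^{⌊n/2⌋} γ_i t^i (1+t)^{n-2i}. Moreover, if h has integer coefficients then so does γ. -/
import Mathlib


open Polynomial

/-- The expansion `∑ γᵢ tⁱ (1+t)^(n-2i)` determined by the coefficients of `γ`. -/
noncomputable def gammaExpand {F : Type*} [Field F] (n : ℕ) (γ : F[X]) : F[X] :=
  ∑ i ∈ Finset.range (n / 2 + 1), C (γ.coeff i) * X ^ i * (1 + X) ^ (n - 2 * i)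

lemma gammaExpand_coeff {F : Type*} [Field F] (n : ℕ) (γ : F[X]) (k : ℕ) :
    (gammaExpand n γ).coeff k =
      ∑ i ∈ Finset.range (n / 2 + 1),
        if i ≤ k then γ.coeff i * ((n - 2 * i).choose (k - i) : F) else 0 := by
  unfold gammaExpand
  rw [Polynomial.finset_sum_coeff]
  refine Finset.sum_congr rfl fun i _ => ?_
  rw [mul_right_comm, Polynomial.coeff_mul_X_pow']
  split_ifs with hik
  · rw [Polynomial.coeff_C_mul, Polynomial.coeff_one_add_X_pow]
  · rfl

lemma gammaExpand_coeff_triangular {F : Type*} [Field F] (n : ℕ) (γ : F[X]) (k : ℕ)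
    (hk : k ≤ n / 2) :
    (gammaExpand n γ).coeff k =
      (∑ i ∈ Finset.range k, γ.coeff i * ((n - 2 * i).choose (k - i) : F)) + γ.coeff k := by
  rw [gammaExpand_coeff]
  have h2 : ∑ i ∈ Finset.range (n / 2 + 1),
      (if i ≤ k then γ.coeff i * ((n - 2 * i).choose (k - i) : F) else 0)
      = ∑ i ∈ Finset.range (k + 1), γ.coeff i * ((n - 2 * i).choose (k - i) : F) := by
    rw [← Finset.sum_filter]
    congr 1
    ext i
    simp only [Finset.mem_filter, Finset.mem_range]
    omega
  rw [h2, Finset.sum_range_succ, Nat.sub_self]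
  simp

lemma key {F : Type*} [Field F] (n : ℕ) (h γ : F[X]) (hγ : h = gammaExpand n γ)
    (k : ℕ) (hk : k ≤ n / 2) :
    γ.coeff k = h.coeff k -
      ∑ i ∈ Finset.range k, γ.coeff i * ((n - 2 * i).choose (k - i) : F) := by
  rw [hγ, gammaExpand_coeff_triangular n γ k hk]
  ring

lemma gammaExpand_rec {F : Type*} [Field F] (n : ℕ) (γ : F[X]) (k : ℕ) (hk : k ≤ n) :
    (gammaExpand n γ).coeff k = (gammaExpand n γ).coeff (n - k) := by
  rw [gammaExpand_coeff, gammaExpand_coeff]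
  refine Finset.sum_congr rfl fun i hi => ?_
  have hi' : 2 * i ≤ n := by
    simp only [Finset.mem_range] at hi; omega
  have keyn : (if i ≤ k then ((n - 2 * i).choose (k - i)) else 0)
      = (if i ≤ n - k then ((n - 2 * i).choose (n - k - i)) else 0) := by
    split_ifs with h1 h2 h2
    · rcases le_or_gt k (n - i) with hle | hlt
      · have heq : n - k - i = (n - 2 * i) - (k - i) := by omega
        rw [heq, Nat.choose_symm (by omega)]
      · rw [Nat.choose_eq_zero_of_lt (by omega), Nat.choose_eq_zero_of_lt (by omega)]
    · rw [Nat.choose_eq_zero_of_lt (by omega)]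
    · rw [Nat.choose_eq_zero_of_lt (by omega)]
    · rfl
  have cast1 : (if i ≤ k then γ.coeff i * ((n - 2 * i).choose (k - i) : F) else 0)
      = γ.coeff i * ((if i ≤ k then ((n - 2 * i).choose (k - i)) else 0 : ℕ) : F) := by
    split_ifs <;> simp
  have cast2 : (if i ≤ n - k then γ.coeff i * ((n - 2 * i).choose (n - k - i) : F) else 0)
      = γ.coeff i * ((if i ≤ n - k then ((n - 2 * i).choose (n - k - i)) else 0 : ℕ) : F) := by
    split_ifs <;> simp
  rw [cast1, cast2, keyn]

lemma gammaExpand_coeff_zero {F : Type*} [Field F] (n : ℕ) (γ : F[X]) (k : ℕ) (hk : n < k) :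
    (gammaExpand n γ).coeff k = 0 := by
  rw [gammaExpand_coeff]
  refine Finset.sum_eq_zero fun i hi => ?_
  simp only [Finset.mem_range] at hi
  split_ifs with h1
  · rw [Nat.choose_eq_zero_of_lt (by omega), Nat.cast_zero, mul_zero]
  · rfl

noncomputable def gSeq {F : Type*} [Field F] (n : ℕ) (h : F[X]) : ℕ → F
  | k => h.coeff k - ∑ i ∈ (Finset.range k).attach,
      have : (i : ℕ) < k := Finset.mem_range.mp i.2
      gSeq n h i * ((n - 2 * (i : ℕ)).choose (k - i) : F)

lemma gSeq_def {F : Type*} [Field F] (n : ℕ) (h : F[X]) (k : ℕ) :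
    gSeq n h k = h.coeff k -
      ∑ i ∈ Finset.range k, gSeq n h i * ((n - 2 * i).choose (k - i) : F) := by
  rw [gSeq]
  congr 1
  exact Finset.sum_attach _ fun i => gSeq n h i * ((n - 2 * i).choose (k - i) : F)

theorem stmt_0 {F : Type*} [Field F] [CharZero F] (n : ℕ) (h : F[X])
    (hdeg : h.degree = n) (hrec : ∀ i ≤ n, h.coeff i = h.coeff (n - i)) :
    (∃! γ : F[X], γ.natDegree ≤ n / 2 ∧ h = gammaExpand n γ) ∧
    ((∀ i, ∃ z : ℤ, h.coeff i = (z : F)) →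
      ∀ γ : F[X], γ.natDegree ≤ n / 2 ∧ h = gammaExpand n γ →
        ∀ i, ∃ z : ℤ, γ.coeff i = (z : F)) := by
  have hnd : h.natDegree = n := natDegree_eq_of_degree_eq_some hdeg
  have hzero : ∀ k, n < k → h.coeff k = 0 := fun k hk =>
    coeff_eq_zero_of_natDegree_lt (hnd ▸ hk)
  -- the candidate γ
  set γ₀ : F[X] := ∑ k ∈ Finset.range (n / 2 + 1), C (gSeq n h k) * X ^ k with hγ₀
  have hγ₀coeff : ∀ j, γ₀.coeff j = if j ≤ n / 2 then gSeq n h j else 0 := by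
    intro j
    rw [hγ₀, Polynomial.finset_sum_coeff]
    simp only [Polynomial.coeff_C_mul, Polynomial.coeff_X_pow, mul_ite, mul_one, mul_zero]
    rw [Finset.sum_ite_eq (Finset.range (n / 2 + 1)) j (fun k => gSeq n h k)]
    simp [Nat.lt_succ_iff]
  have hdeg₀ : γ₀.natDegree ≤ n / 2 := by
    rw [natDegree_le_iff_coeff_eq_zero]
    intro m hm
    rw [hγ₀coeff m, if_neg (by omega)]
  -- low coefficients agree
  have hlow : ∀ k ≤ n / 2, (gammaExpand n γ₀).coeff k = h.coeff k := by
    intro k hk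
    rw [gammaExpand_coeff_triangular n γ₀ k hk, hγ₀coeff k, if_pos hk, gSeq_def n h k]
    have : ∑ i ∈ Finset.range k, γ₀.coeff i * ((n - 2 * i).choose (k - i) : F)
        = ∑ i ∈ Finset.range k, gSeq n h i * ((n - 2 * i).choose (k - i) : F) := by
      refine Finset.sum_congr rfl fun i hi => ?_
      simp only [Finset.mem_range] at hi
      rw [hγ₀coeff i, if_pos (by omega)]
    rw [this]
    ring
  have hex : h = gammaExpand n γ₀ := by
    ext k
    rcases le_or_gt k n with hkn | hkn
    · rcases le_or_gt k (n / 2) with hk | hk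
      · exact (hlow k hk).symm
      · have hnk : n - k ≤ n / 2 := by omega
        rw [hrec k hkn, gammaExpand_rec n γ₀ k hkn]
        exact (hlow (n - k) hnk).symm
    · rw [hzero k hkn, gammaExpand_coeff_zero n γ₀ k hkn]
  -- any solution agrees with gSeq on low coefficients
  have huniq : ∀ γ : F[X], γ.natDegree ≤ n / 2 → h = gammaExpand n γ →
      ∀ k, k ≤ n / 2 → γ.coeff k = gSeq n h k := by
    intro γ hγd hγe k
    induction k using Nat.strong_induction_on with
    | _ k ih =>
      intro hk
      rw [key n h γ hγe k hk, gSeq_def n h k]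
      congr 1
      refine Finset.sum_congr rfl fun i hi => ?_
      simp only [Finset.mem_range] at hi
      rw [ih i hi (by omega)]
  constructor
  · refine ⟨γ₀, ⟨hdeg₀, hex⟩, ?_⟩
    rintro γ ⟨hγd, hγe⟩
    ext j
    rcases le_or_gt j (n / 2) with hj | hj
    · rw [huniq γ hγd hγe j hj, hγ₀coeff j, if_pos hj]
    · rw [coeff_eq_zero_of_natDegree_lt (lt_of_le_of_lt hγd hj),
        coeff_eq_zero_of_natDegree_lt (lt_of_le_of_lt hdeg₀ hj)]
  · rintro hint γ ⟨hγd, hγe⟩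
    have main : ∀ k, γ.coeff k ∈ (Int.castRingHom F).range := by
      intro k
      induction k using Nat.strong_induction_on with
      | _ k ih =>
        rcases le_or_gt k (n / 2) with hk | hk
        · rw [key n h γ hγe k hk]
          refine sub_mem ?_ (sum_mem fun i hi => ?_)
          · obtain ⟨z, hz⟩ := hint k
            exact ⟨z, hz.symm⟩
          · simp only [Finset.mem_range] at hi
            exact mul_mem (ih i hi) ⟨((n - 2 * i).choose (k - i) : ℤ), by simp⟩
        · rw [coeff_eq_zero_of_natDegree_lt (lt_of_le_of_lt hγd hk)]
          exact zero_mem _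
    intro i
    obtain ⟨z, hz⟩ := main i
    exact ⟨z, hz.symm⟩
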